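/- For every integer m ≥ 2, the worst-case state complexity of L1^R · L2, where L1 ranges over languages of state complexity m and L2 over languages of state complexity 1, equals 2^(m-1) + 1. -/

import Mathlib

open Computability

/-- The reversal of a language. -/
def revLang {α : Type} (L : Language α) : Language α := {w | w.reverse ∈ L}

/-- The state complexity of a language: the least number of states of a complete DFA
    accepting it. -/
noncomputable def stateComplexity {α : Type} (L : Language α) : ℕ :=
  sInf {k | ∃ (σ : Type) (inst : Fintype σ) (M : DFA α σ),
    @Fintype.card σ inst = k ∧ M.accepts = L}

section Upper

variable {α Q : Type} (M : DFA α Q)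

/-- `u` has a prefix whose reversal is accepted by `M`. -/
def hasAccPrefix (u : List α) : Prop := ∃ p s : List α, u = p ++ s ∧ p.reverse ∈ M.accepts

/-- membership of `q` in the set represented by `f`. -/
def memb (f : {q : Q // q ≠ M.start} → Bool) (q : Q) : Prop :=
  ∃ h : q ≠ M.start, f ⟨q, h⟩ = true

open Classical in
/-- The subset-automaton (with accepting sink) for `M.accepts^R * ⊤`. -/
noncomputable def sinkDFA : DFA α (Option ({q : Q // q ≠ M.start} → Bool)) where
  step s a := match s with
    | none => none
    | some f =>
        if memb M f (M.step M.start a) then none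
        else some (fun p => if memb M f (M.step p.val a) then true else false)
  start := if M.start ∈ M.accept then none else some (fun p => if p.val ∈ M.accept then true else false)
  accept := {none}

lemma hasAccPrefix_append (u : List α) (a : α) :
    hasAccPrefix M (u ++ [a]) ↔ hasAccPrefix M u ∨ (u ++ [a]).reverse ∈ M.accepts := by
  constructor
  · rintro ⟨p, s, h, hp⟩
    rcases s.eq_nil_or_concat with rfl | ⟨s', b, rfl⟩
    · right; rw [List.append_nil] at h; rwa [h]
    · left
      rw [List.concat_eq_append, ← List.append_assoc] at h
      obtain ⟨h1, h2⟩ := List.append_inj h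
        (by have := congrArg List.length h; simp only [List.length_append, List.length_cons, List.length_nil] at this ⊢; omega)
      exact ⟨p, s', h1, hp⟩
  · rintro (⟨p, s, rfl, hp⟩ | h)
    · exact ⟨p, s ++ [a], by simp, hp⟩
    · exact ⟨u ++ [a], [], by simp, h⟩

open Classical in
lemma sinkDFA_eval (u : List α) :
    (sinkDFA M).eval u =
      if hasAccPrefix M u then none
      else some (fun p => if M.evalFrom p.val u.reverse ∈ M.accept then true else false) := by
  induction u using List.reverseRecOn with
  | nil =>
      have h0 : hasAccPrefix M [] ↔ M.start ∈ M.accept := by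
        constructor
        · rintro ⟨p, s, h, hp⟩
          have hp' : p = [] := (List.append_eq_nil_iff.mp h.symm).1
          subst hp'
          simpa [DFA.mem_accepts, DFA.eval, DFA.evalFrom] using hp
        · intro h
          exact ⟨[], [], rfl, by simpa [DFA.mem_accepts, DFA.eval, DFA.evalFrom] using h⟩
      show (sinkDFA M).start = _
      rw [sinkDFA]
      by_cases h : M.start ∈ M.accept
      · simp [h, h0.mpr h]
      · simp only [if_neg h, if_neg (fun hh => h (h0.mp hh))]
        congr 1
  | append_singleton u a ih =>
      rw [DFA.eval_append_singleton, ih]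
      by_cases hu : hasAccPrefix M u
      · have : hasAccPrefix M (u ++ [a]) := (hasAccPrefix_append M u a).mpr (Or.inl hu)
        simp [hu, this, sinkDFA]
      · -- eval u = some f with f p ↔ evalFrom p u.reverse ∈ accept
        have hq0 : M.evalFrom M.start u.reverse ∉ M.accept := by
          intro h
          exact hu ⟨u, [], by simp, (DFA.mem_accepts M).mpr h⟩
        have hmemb : ∀ q : Q,
            memb M (fun p => if M.evalFrom p.val u.reverse ∈ M.accept then true else false) q
              ↔ M.evalFrom q u.reverse ∈ M.accept := by
          intro q
          constructor
          · rintro ⟨h, hf⟩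
            by_contra hc; simp [hc] at hf
          · intro h
            have hq : q ≠ M.start := fun e => hq0 (e ▸ h)
            exact ⟨hq, by simp [h]⟩
        have hwhole : M.step M.start a = M.evalFrom M.start [a] := rfl
        have hcons : ∀ q : Q, M.evalFrom (M.step q a) u.reverse = M.evalFrom q ((u ++ [a]).reverse) := by
          intro q; simp [List.reverse_append, DFA.evalFrom]
        rw [if_neg hu]
        show (if memb M _ (M.step M.start a) then none else _) = _
        by_cases hw : (u ++ [a]).reverse ∈ M.accepts
        · have hm : memb M (fun p => if M.evalFrom p.val u.reverse ∈ M.accept then true else false)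
              (M.step M.start a) := by
            rw [hmemb]
            rw [hcons M.start]
            exact (DFA.mem_accepts M).mp hw
          have hpre : hasAccPrefix M (u ++ [a]) := (hasAccPrefix_append M u a).mpr (Or.inr hw)
          rw [if_pos hm, if_pos hpre]
        · have hm : ¬ memb M (fun p => if M.evalFrom p.val u.reverse ∈ M.accept then true else false)
              (M.step M.start a) := by
            rw [hmemb, hcons M.start]
            exact fun h => hw ((DFA.mem_accepts M).mpr h)
          have hnp : ¬ hasAccPrefix M (u ++ [a]) := by
            rw [hasAccPrefix_append]; tauto
          rw [if_neg hm, if_neg hnp]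
          congr 1
          funext p
          rw [hmemb, hcons p.val]

lemma sinkDFA_accepts : (sinkDFA M).accepts = revLang M.accepts * (⊤ : Language α) := by
  ext w
  rw [DFA.mem_accepts, sinkDFA_eval]
  constructor
  · intro h
    by_cases hp : hasAccPrefix M w
    · obtain ⟨p, s, rfl, hacc⟩ := hp
      exact Language.mem_mul.mpr ⟨p, hacc, s, trivial, rfl⟩
    · rw [if_neg hp] at h
      simp [sinkDFA] at h
  · intro h
    obtain ⟨p, hp, s, -, rfl⟩ := Language.mem_mul.mp h
    have : hasAccPrefix M (p ++ s) := ⟨p, s, rfl, hp⟩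
    simp [this, sinkDFA]

lemma card_sinkState [Fintype Q] :
    letI := Classical.decEq Q
    Fintype.card (Option ({q : Q // q ≠ M.start} → Bool)) = 2 ^ (Fintype.card Q - 1) + 1 := by
  letI := Classical.decEq Q
  rw [Fintype.card_option, Fintype.card_fun, Fintype.card_bool]
  congr 2
  have : Fintype.card {q : Q // q ≠ M.start} = Fintype.card Q - Fintype.card {q : Q // q = M.start} :=
    Fintype.card_subtype_compl _
  rw [this, Fintype.card_subtype_eq]

end Upper

section Basic

lemma sc_le {α : Type} (L : Language α) (σ : Type) (inst : Fintype σ) (M : DFA α σ)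
    (h : M.accepts = L) : stateComplexity L ≤ Fintype.card σ :=
  Nat.sInf_le ⟨σ, inst, M, rfl, h⟩

lemma sc_ge {α : Type} (L : Language α) (ι : Type) [Fintype ι] (w : ι → List α)
    (hw : ∀ i j, i ≠ j → ∃ z, (w i ++ z ∈ L) ≠ (w j ++ z ∈ L))
    (σ0 : Type) (inst0 : Fintype σ0) (M0 : DFA α σ0) (h0 : M0.accepts = L) :
    Fintype.card ι ≤ stateComplexity L := by
  obtain ⟨σ, inst, M, hcard, hacc⟩ :=
    Nat.sInf_mem (⟨Fintype.card σ0, σ0, inst0, M0, rfl, h0⟩ :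
      Set.Nonempty {k | ∃ (σ : Type) (inst : Fintype σ) (M : DFA α σ),
        @Fintype.card σ inst = k ∧ M.accepts = L})
  rw [stateComplexity, ← hcard]
  refine @Fintype.card_le_of_injective ι σ _ inst (fun i => M.eval (w i)) ?_
  intro i j hij
  by_contra hne
  obtain ⟨z, hz⟩ := hw i j hne
  apply hz
  rw [← hacc]
  have hev : M.eval (w i ++ z) = M.eval (w j ++ z) := by
    simp only [DFA.eval, DFA.evalFrom_of_append]
    exact congrArg (fun s => M.evalFrom s z) hij
  simp only [DFA.mem_accepts, hev]

lemma sc_one_dfa {α : Type} (L : Language α) (h : stateComplexity L = 1) :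
    ∃ (σ : Type) (inst : Fintype σ) (M : DFA α σ), @Fintype.card σ inst = 1 ∧ M.accepts = L := by
  have hne : Set.Nonempty {k | ∃ (σ : Type) (inst : Fintype σ) (M : DFA α σ),
      @Fintype.card σ inst = k ∧ M.accepts = L} := by
    by_contra hc
    rw [Set.not_nonempty_iff_eq_empty] at hc
    rw [stateComplexity, hc, Nat.sInf_empty] at h
    exact absurd h one_ne_zero.symm
  have := Nat.sInf_mem hne
  rw [show sInf _ = stateComplexity L from rfl, h] at this
  exact this

/-- A DFA with one state accepts `⊤` or `0`. -/
lemma sc_one_top_or_bot {α : Type} (L : Language α) (h : stateComplexity L = 1) :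
    L = ⊤ ∨ L = 0 := by
  obtain ⟨σ, inst, M, hcard, hacc⟩ := sc_one_dfa L h
  have hsub : ∀ s t : σ, s = t := fun s t =>
    (@Fintype.card_le_one_iff σ inst).mp hcard.le s t
  have heval : ∀ w : List α, M.eval w = M.start := fun w => hsub _ _
  by_cases hs : M.start ∈ M.accept
  · left; rw [← hacc]; ext w
    exact iff_of_true ((DFA.mem_accepts M).mpr (by rw [heval]; exact hs)) trivial
  · right; rw [← hacc]; ext w
    exact iff_of_false (fun hc => hs (heval w ▸ (DFA.mem_accepts M).mp hc))
      (Language.notMem_zero w)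

lemma sc_pos {α : Type} (L : Language α) (σ0 : Type) (inst0 : Fintype σ0) (M0 : DFA α σ0)
    (h0 : M0.accepts = L) : 1 ≤ stateComplexity L := by
  obtain ⟨σ, inst, M, hcard, hacc⟩ :=
    Nat.sInf_mem (⟨Fintype.card σ0, σ0, inst0, M0, rfl, h0⟩ :
      Set.Nonempty {k | ∃ (σ : Type) (inst : Fintype σ) (M : DFA α σ),
        @Fintype.card σ inst = k ∧ M.accepts = L})
  rw [stateComplexity, ← hcard]
  exact @Fintype.card_pos σ inst ⟨M.start⟩

lemma sc_empty {α : Type} : stateComplexity (0 : Language α) = 1 := by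
  have hacc : (⟨fun _ _ => (), (), ∅⟩ : DFA α Unit).accepts = 0 := by
    ext w
    exact iff_of_false (fun hc => (DFA.mem_accepts _).mp hc) (Language.notMem_zero w)
  refine le_antisymm ?_ (sc_pos _ Unit inferInstance _ hacc)
  simpa using sc_le _ Unit inferInstance _ hacc

lemma sc_top {α : Type} : stateComplexity (⊤ : Language α) = 1 := by
  have hacc : (⟨fun _ _ => (), (), Set.univ⟩ : DFA α Unit).accepts = ⊤ := by
    ext w
    exact iff_of_true ((DFA.mem_accepts _).mpr trivial) trivial
  refine le_antisymm ?_ (sc_pos _ Unit inferInstance _ hacc)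
  simpa using sc_le _ Unit inferInstance _ hacc

end Basic

section Witness

/-- Helper: words with an accepted-reversed prefix, base cases. -/
lemma hasAccPrefix_nil {α Q : Type} (M : DFA α Q) :
    hasAccPrefix M [] ↔ M.start ∈ M.accept := by
  constructor
  · rintro ⟨p, s, h, hp⟩
    have hp' : p = [] := (List.append_eq_nil_iff.mp h.symm).1
    subst hp'
    simpa [DFA.mem_accepts, DFA.eval, DFA.evalFrom] using hp
  · intro h
    exact ⟨[], [], rfl, by simpa [DFA.mem_accepts, DFA.eval, DFA.evalFrom] using h⟩

lemma mem_revcat_iff {α Q : Type} (M : DFA α Q) (u : List α) :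
    u ∈ revLang M.accepts * (⊤ : Language α) ↔ hasAccPrefix M u := by
  constructor
  · intro h
    obtain ⟨p, hp, s, -, rfl⟩ := Language.mem_mul.mp h
    exact ⟨p, s, rfl, hp⟩
  · rintro ⟨p, s, rfl, hp⟩
    exact Language.mem_mul.mpr ⟨p, hp, s, trivial, rfl⟩

/-- The witness DFA: states `Fin (k+2)`, alphabet all functions, start 0, accept {1}. -/
def wM (k : ℕ) : DFA (Fin (k+2) → Fin (k+2)) (Fin (k+2)) where
  step q a := a q
  start := 0
  accept := {1}

variable (k : ℕ)

lemma fin_zero_ne_one : (0 : Fin (k+2)) ≠ 1 := by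
  intro h
  have := congrArg Fin.val h
  simp [Fin.val_zero, Fin.val_one] at this

lemma wM_mem_single (x : Fin (k+2) → Fin (k+2)) :
    [x] ∈ (wM k).accepts ↔ x 0 = 1 := by
  rw [DFA.mem_accepts]
  exact Set.mem_singleton_iff

lemma wM_mem_pair (x y : Fin (k+2) → Fin (k+2)) :
    [x, y] ∈ (wM k).accepts ↔ y (x 0) = 1 := by
  rw [DFA.mem_accepts]
  exact Set.mem_singleton_iff

lemma wM_hasAcc_single (x : Fin (k+2) → Fin (k+2)) :
    hasAccPrefix (wM k) [x] ↔ x 0 = 1 := by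
  rw [show [x] = [] ++ [x] from rfl, hasAccPrefix_append, hasAccPrefix_nil]
  rw [show (([] : List (Fin (k+2) → Fin (k+2))) ++ [x]).reverse = [x] by simp, wM_mem_single]
  have h0 : (wM k).start ∉ (wM k).accept := by
    simpa [wM] using fin_zero_ne_one k
  tauto

lemma wM_hasAcc_pair (x y : Fin (k+2) → Fin (k+2)) :
    hasAccPrefix (wM k) [x, y] ↔ x 0 = 1 ∨ x (y 0) = 1 := by
  rw [show [x, y] = [x] ++ [y] from rfl, hasAccPrefix_append, wM_hasAcc_single]
  rw [show ([x] ++ [y]).reverse = [y, x] from rfl, wM_mem_pair]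

lemma sc_wM : stateComplexity (wM k).accepts = k + 2 := by
  refine le_antisymm ?_ ?_
  · simpa using sc_le _ _ inferInstance (wM k) rfl
  · have := sc_ge (wM k).accepts (Fin (k+2)) (fun q => [fun _ => q]) ?_ _ inferInstance (wM k) rfl
    · simpa using this
    · intro i j hij
      refine ⟨[fun r => if r = i then 1 else 0], ?_⟩
      have hi : ([fun _ => i] ++ [fun r => if r = i then (1 : Fin (k+2)) else 0] ∈ (wM k).accepts) := by
        rw [show [fun _ => i] ++ [fun r => if r = i then (1 : Fin (k+2)) else 0]
            = [fun _ => i, fun r => if r = i then 1 else 0] from rfl, wM_mem_pair]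
        simp
      have hj : ¬ ([fun _ => j] ++ [fun r => if r = i then (1 : Fin (k+2)) else 0] ∈ (wM k).accepts) := by
        rw [show [fun _ => j] ++ [fun r => if r = i then (1 : Fin (k+2)) else 0]
            = [fun _ => j, fun r => if r = i then 1 else 0] from rfl, wM_mem_pair]
        simp only [if_neg hij.symm]
        exact (fin_zero_ne_one k)
      intro h
      exact hj (h ▸ hi)

/-- Index type for the fooling family. -/
abbrev wIdx (k : ℕ) := Option ({q : Fin (k+2) // q ≠ 0} → Bool)

lemma card_wIdx : Fintype.card (wIdx k) = 2 ^ (k+1) + 1 := by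
  rw [Fintype.card_option, Fintype.card_fun, Fintype.card_bool,
    Fintype.card_subtype_compl, Fintype.card_subtype_eq, Fintype.card_fin]
  rfl

/-- The word associated to an index. -/
noncomputable def wWord (k : ℕ) : wIdx k → List (Fin (k+2) → Fin (k+2))
  | none => [fun _ => 1]
  | some f => [fun q => if h : q = 0 then 0 else (if f ⟨q, h⟩ then 1 else 0)]

lemma wWord_some_mem (f : {q : Fin (k+2) // q ≠ 0} → Bool) (z : Fin (k+2)) (hz : z ≠ 0) :
    (fun q => if h : q = 0 then (0 : Fin (k+2)) else (if f ⟨q, h⟩ then 1 else 0)) z = 1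
      ↔ f ⟨z, hz⟩ = true := by
  show (if h : z = 0 then (0 : Fin (k+2)) else (if f ⟨z, h⟩ then 1 else 0)) = 1 ↔ f ⟨z, hz⟩ = true
  rw [dif_neg hz]
  by_cases hf : f ⟨z, hz⟩ = true
  · simp [hf]
  · simp only [hf, if_false, Bool.false_eq_true, iff_false]
    exact fun h => (fin_zero_ne_one k) h

lemma wWord_none_mem :
    wWord k none ∈ revLang (wM k).accepts * (⊤ : Language (Fin (k+2) → Fin (k+2))) := by
  rw [mem_revcat_iff, show wWord k none = [fun _ => 1] from rfl, wM_hasAcc_single]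

lemma wWord_some_not_mem (f : {q : Fin (k+2) // q ≠ 0} → Bool) :
    wWord k (some f) ∉ revLang (wM k).accepts * (⊤ : Language (Fin (k+2) → Fin (k+2))) := by
  intro h
  rw [mem_revcat_iff, wWord, wM_hasAcc_single, dif_pos rfl] at h
  exact (fin_zero_ne_one k) h

lemma wWord_some_ext (f : {q : Fin (k+2) // q ≠ 0} → Bool) (p : {q : Fin (k+2) // q ≠ 0}) :
    (wWord k (some f) ++ [fun _ => p.val]
      ∈ revLang (wM k).accepts * (⊤ : Language (Fin (k+2) → Fin (k+2)))) ↔ f p = true := by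
  rw [mem_revcat_iff]
  rw [show wWord k (some f) ++ [fun _ => p.val]
      = [fun q => if h : q = 0 then (0:Fin (k+2)) else (if f ⟨q, h⟩ then 1 else 0),
         fun _ => p.val] from rfl, wM_hasAcc_pair]
  rw [dif_pos rfl]
  have hmain := wWord_some_mem k f p.val p.prop
  constructor
  · rintro (h | h)
    · exact absurd h (fin_zero_ne_one k)
    · exact hmain.mp h
  · intro h
    exact Or.inr (hmain.mpr h)

lemma wWord_distinguishable (i j : wIdx k) (hij : i ≠ j) :
    ∃ z, ((wWord k i ++ z ∈ revLang (wM k).accepts * (⊤ : Language (Fin (k+2) → Fin (k+2))))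
      ≠ (wWord k j ++ z ∈ revLang (wM k).accepts * ⊤)) := by
  have key : ∀ (f : {q : Fin (k+2) // q ≠ 0} → Bool) (o : wIdx k), o = some f → ∀ hne : (none : wIdx k) ≠ o,
      ∃ z, ((wWord k none ++ z ∈ revLang (wM k).accepts * (⊤ : Language (Fin (k+2) → Fin (k+2))))
        ≠ (wWord k o ++ z ∈ revLang (wM k).accepts * ⊤)) := by
    rintro f o rfl -
    refine ⟨[], ?_⟩
    intro h
    apply wWord_some_not_mem k f
    rw [← List.append_nil (wWord k (some f)), ← h, List.append_nil]
    exact wWord_none_mem k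
  match i, j with
  | none, none => exact absurd rfl hij
  | none, some f => exact key f (some f) rfl hij
  | some f, none =>
      obtain ⟨z, hz⟩ := key f (some f) rfl (Ne.symm hij)
      exact ⟨z, hz.symm⟩
  | some f, some g =>
      have hfg : f ≠ g := fun h => hij (by rw [h])
      have : ∃ p, f p ≠ g p := by
        by_contra hc
        push_neg at hc
        exact hfg (funext hc)
      obtain ⟨p, hp⟩ := this
      refine ⟨[fun _ => p.val], ?_⟩
      rw [wWord_some_ext, wWord_some_ext]
      intro h
      apply hp
      rcases Bool.eq_false_or_eq_true (f p) with hf | hf <;>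
        rcases Bool.eq_false_or_eq_true (g p) with hg | hg <;>
        simp_all

lemma sc_revcat_wM :
    stateComplexity (revLang (wM k).accepts * (⊤ : Language (Fin (k+2) → Fin (k+2))))
      = 2 ^ (k+1) + 1 := by
  refine le_antisymm ?_ ?_
  · have hle := sc_le _ _ inferInstance (sinkDFA (wM k)) (sinkDFA_accepts (wM k))
    rw [Fintype.card_option, Fintype.card_fun, Fintype.card_bool] at hle
    rwa [Fintype.card_subtype_compl, Fintype.card_subtype_eq, Fintype.card_fin] at hle
  · have := sc_ge _ (wIdx k) (wWord k) (wWord_distinguishable k) _ inferInstance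
      (sinkDFA (wM k)) (sinkDFA_accepts (wM k))
    rwa [card_wIdx] at this

end Witness

/-- The worst-case state complexity of L₁^R · L₂ over languages L₁ of state complexity m ≥ 2
    and L₂ of state complexity 1 equals 2^(m-1) + 1. -/
theorem revcat_state_complexity_n_eq_one (m : ℕ) (hm : 2 ≤ m) :
    IsGreatest {k | ∃ (α : Type) (_ : Fintype α) (L₁ L₂ : Language α),
        stateComplexity L₁ = m ∧ stateComplexity L₂ = 1 ∧
        stateComplexity (revLang L₁ * L₂) = k}
      (2 ^ (m - 1) + 1) := by
  obtain ⟨k, rfl⟩ : ∃ k, m = k + 2 := ⟨m - 2, by omega⟩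
  constructor
  · -- membership
    refine ⟨Fin (k+2) → Fin (k+2), inferInstance, (wM k).accepts, ⊤, sc_wM k, sc_top, ?_⟩
    rw [sc_revcat_wM k, show k + 2 - 1 = k + 1 from rfl]
  · -- upper bound
    rintro n ⟨α, instα, L₁, L₂, h1, h2, rfl⟩
    have hne : Set.Nonempty {j | ∃ (σ : Type) (inst : Fintype σ) (M : DFA α σ),
        @Fintype.card σ inst = j ∧ M.accepts = L₁} := by
      by_contra hc
      rw [Set.not_nonempty_iff_eq_empty] at hc
      rw [stateComplexity, hc, Nat.sInf_empty] at h1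
      omega
    obtain ⟨σ, inst, M, hcard, hacc⟩ := Nat.sInf_mem hne
    rw [show sInf _ = stateComplexity L₁ from rfl, h1] at hcard
    rcases sc_one_top_or_bot L₂ h2 with rfl | rfl
    · -- L₂ = ⊤
      letI := Classical.decEq σ
      letI := inst
      have hle := sc_le (revLang L₁ * ⊤) _ inferInstance (sinkDFA M)
        (by rw [sinkDFA_accepts, hacc])
      rw [Fintype.card_option, Fintype.card_fun, Fintype.card_bool,
        Fintype.card_subtype_compl, Fintype.card_subtype_eq, hcard] at hle
      exact hle
    · -- L₂ = 0
      rw [mul_zero, sc_empty]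
      have : 1 ≤ 2 ^ (k + 2 - 1) := Nat.one_le_two_pow
      omega
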